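/- For every n ≥ 0 and every real x ≠ 1, B̂_n(x) = (1−x)^n · Q_n( (1+x)/(1−x) ), where Q_n is the n-th derivative polynomial for secant. -/

import Mathlib

open Finset

/-- Signed permutations of order `n` (the hyperoctahedral group), modeled as a
permutation of `Fin n` together with a sign for each position. -/
abbrev BSigned (n : ℕ) := Equiv.Perm (Fin n) × (Fin n → Bool)

/-- The word of a signed permutation: `bword σ j = σ(j)` for `1 ≤ j ≤ n`,
with the convention `σ(0) = 0`. -/
def bword {n : ℕ} (σ : BSigned n) (j : ℕ) : ℤ :=
  if h : 1 ≤ j ∧ j ≤ n then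
    (if σ.2 ⟨j - 1, by omega⟩ then -1 else 1) * ((σ.1 ⟨j - 1, by omega⟩ : ℕ) + 1)
  else 0

/-- The number of alternating descents of a signed permutation: the number of
`0 ≤ j ≤ n-1` such that `j` is even and `σ(j) < σ(j+1)`, or `j` is odd and `σ(j) > σ(j+1)`. -/
def altdesB {n : ℕ} (σ : BSigned n) : ℕ :=
  ((Finset.range n).filter (fun j => (Even j ∧ bword σ j < bword σ (j + 1)) ∨
      (Odd j ∧ bword σ (j + 1) < bword σ j))).card

/-- The type B alternating Eulerian number `B̂(n,k)`. -/
def Bhat (n k : ℕ) : ℕ :=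
  (Finset.univ.filter (fun σ : BSigned n => altdesB σ = k)).card

/-- The type B alternating Eulerian polynomial `B̂_n(x)` as a real function. -/
noncomputable def Bpoly (n : ℕ) (x : ℝ) : ℝ :=
  ∑ σ : BSigned n, x ^ altdesB σ

/-- The word of a permutation of `{1,…,n}`: `aword π j = π(j)` for `1 ≤ j ≤ n`,
with the convention `π(0) = 0`. -/
def aword {n : ℕ} (π : Equiv.Perm (Fin n)) (j : ℕ) : ℕ :=
  if h : 1 ≤ j ∧ j ≤ n then (π ⟨j - 1, by omega⟩ : ℕ) + 1 else 0

/-- The number of alternating descents of a permutation: the number of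
`1 ≤ j ≤ n-1` such that `j` is odd and `π(j) > π(j+1)`, or `j` is even and `π(j) < π(j+1)`. -/
def altdesA {n : ℕ} (π : Equiv.Perm (Fin n)) : ℕ :=
  ((Finset.Icc 1 (n - 1)).filter (fun j => (Odd j ∧ aword π (j + 1) < aword π j) ∨
      (Even j ∧ aword π j < aword π (j + 1)))).card

/-- The type A alternating Eulerian number `Â(n,k)`. -/
def Ahat (n k : ℕ) : ℕ :=
  (Finset.univ.filter (fun π : Equiv.Perm (Fin n) => altdesA π = k)).card

/-- The type A alternating Eulerian polynomial `Â_n(x)` as a real function. -/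
noncomputable def Apoly (n : ℕ) (x : ℝ) : ℝ :=
  ∑ π : Equiv.Perm (Fin n), x ^ altdesA π

/-- The number of left peaks of a permutation: indices `1 ≤ i ≤ n-1` with
`π(i-1) < π(i) > π(i+1)`, where `π(0) = 0`. -/
def lpk {n : ℕ} (π : Equiv.Perm (Fin n)) : ℕ :=
  ((Finset.Icc 1 (n - 1)).filter (fun i =>
      aword π (i - 1) < aword π i ∧ aword π (i + 1) < aword π i)).card

/-- `M n k` is the number of permutations of `{1,…,n}` with exactly `k` left peaks. -/
def M (n k : ℕ) : ℕ :=
  (Finset.univ.filter (fun π : Equiv.Perm (Fin n) => lpk π = k)).card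

/-- The derivative polynomials for secant: `Q 0 = 1`,
`Q (n+1) = x Q n + (1+x²) (Q n)'`. -/
noncomputable def Q : ℕ → Polynomial ℝ
  | 0 => 1
  | n + 1 => Polynomial.X * Q n + (1 + Polynomial.X ^ 2) * Polynomial.derivative (Q n)

/-- The coefficients `ξ_{n,i}` (terms with negative index vanish). -/
def xi : ℕ → ℤ → ℤ
  | 0, i => if i = 0 then 1 else 0
  | n + 1, i => (1 + 2 * (n : ℤ) - 6 * i) * xi n i + ((n : ℤ) - 2 * i + 2) * xi n (i - 1)
      - 4 * (i + 1) * xi n (i + 1)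

/-- The polynomial `ξ_n(x) = Σ_{i=0}^{⌊n/2⌋} ξ_{n,i} x^i` as a real function. -/
noncomputable def xiPoly (n : ℕ) (x : ℝ) : ℝ :=
  ∑ i ∈ Finset.range (n / 2 + 1), (xi n i : ℝ) * x ^ i

/-- A snake: a signed permutation with `σ(0) < σ(1) > σ(2) < σ(3) > ⋯`. -/
def IsSnake {n : ℕ} (σ : BSigned n) : Prop :=
  ∀ i : ℕ, (2 * i + 1 ≤ n → bword σ (2 * i) < bword σ (2 * i + 1)) ∧
    (2 * i + 2 ≤ n → bword σ (2 * i + 2) < bword σ (2 * i + 1))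

/-- The Springer number `s_n`: the number of snakes of order `n`. -/
noncomputable def springer (n : ℕ) : ℕ := Nat.card {σ : BSigned n // IsSnake σ}

/-- An alternating (down-up) permutation: `π(1) > π(2) < π(3) > ⋯`. -/
def IsAlternating {m : ℕ} (π : Equiv.Perm (Fin m)) : Prop :=
  ∀ j : ℕ, 1 ≤ j → j + 1 ≤ m →
    (Odd j → aword π (j + 1) < aword π j) ∧ (Even j → aword π j < aword π (j + 1))

/-- The secant number `E_{2n}`: the number of alternating permutations of `{1,…,2n}`. -/
noncomputable def secantNumber (n : ℕ) : ℕ :=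
  Nat.card {π : Equiv.Perm (Fin (2 * n)) // IsAlternating π}

/-- `B̂_n(x) = (1-x)^n · Q_n((1+x)/(1-x))` for `x ≠ 1`, where `Q_n`
is the `n`-th derivative polynomial for secant. -/
def flp {n : ℕ} (σ : BSigned n) (p : ℕ) : BSigned n :=
  (σ.1, fun i => if p ≤ (i : ℕ) then !(σ.2 i) else σ.2 i)

lemma flp_flp {n : ℕ} (σ : BSigned n) (p : ℕ) : flp (flp σ p) p = σ := by
  unfold flp
  refine Prod.ext rfl ?_
  funext i
  by_cases h : p ≤ (i : ℕ) <;> simp [h]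

lemma bword_flp {n : ℕ} (σ : BSigned n) (p : ℕ) (j : ℕ) :
    bword (flp σ p) j = if j ≤ p then bword σ j else -bword σ j := by
  unfold bword flp
  by_cases h : 1 ≤ j ∧ j ≤ n
  · rw [dif_pos h, dif_pos h]
    by_cases h2 : j ≤ p
    · rw [if_pos h2]
      have hne : ¬ p ≤ j - 1 := by omega
      simp [hne]
    · rw [if_neg h2]
      have hle : p ≤ j - 1 := by omega
      simp only [hle, if_true]
      cases hb : σ.2 ⟨j - 1, by omega⟩ <;> simp <;> ring
  · rw [dif_neg h, dif_neg h]
    simp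

lemma count_split (n p : ℕ) (hp : p < n) (f g : ℕ → Prop) [DecidablePred f] [DecidablePred g]
    (hlow : ∀ j, j < p → (f j ↔ g j))
    (hhigh : ∀ j, p < j → j < n → (f (j + 1) ↔ g j)) :
    ((Finset.range (n + 1)).filter f).card + (if g p then 1 else 0)
      = ((Finset.range n).filter g).card
        + ((if f p then 1 else 0) + (if f (p + 1) then 1 else 0)) := by
  rw [Finset.card_filter, Finset.card_filter]
  rw [← Finset.sum_range_add_sum_Ico (fun j => if f j then 1 else 0)
    (show p ≤ n + 1 by omega)]
  rw [Finset.sum_eq_sum_Ico_succ_bot (show p < n + 1 by omega)]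
  rw [Finset.sum_eq_sum_Ico_succ_bot (show p + 1 < n + 1 by omega)]
  rw [← Finset.sum_range_add_sum_Ico (fun j => if g j then 1 else 0)
    (show p ≤ n by omega)]
  rw [Finset.sum_eq_sum_Ico_succ_bot (show p < n by omega)]
  have hlow' : (∑ j ∈ Finset.range p, if f j then 1 else 0)
      = ∑ j ∈ Finset.range p, if g j then 1 else 0 := by
    refine Finset.sum_congr rfl fun j hj => ?_
    rw [if_congr (hlow j (Finset.mem_range.1 hj)) rfl rfl]
  have hmid : (∑ j ∈ Finset.Ico (p + 1 + 1) (n + 1), if f j then 1 else 0)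
      = ∑ j ∈ Finset.Ico (p + 1) n, if g j then 1 else 0 := by
    rw [Finset.sum_Ico_eq_sum_range, Finset.sum_Ico_eq_sum_range]
    have he : n + 1 - (p + 1 + 1) = n - (p + 1) := by omega
    rw [he]
    refine Finset.sum_congr rfl fun i hi => ?_
    have hi' : i < n - (p + 1) := Finset.mem_range.1 hi
    have e : p + 1 + 1 + i = (p + 1 + i) + 1 := by omega
    rw [e, if_congr (hhigh (p + 1 + i) (by omega) (by omega)) rfl rfl]
  omega

def acnd {n : ℕ} (σ : BSigned n) (j : ℕ) : Prop :=
  (Even j ∧ bword σ j < bword σ (j + 1)) ∨ (Odd j ∧ bword σ (j + 1) < bword σ j)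

instance {n : ℕ} (σ : BSigned n) : DecidablePred (acnd σ) := fun j => by
  unfold acnd; infer_instance

lemma altdesB_eq {n : ℕ} (σ : BSigned n) :
    altdesB σ = ((Finset.range n).filter (acnd σ)).card := rfl

def ins {n : ℕ} (σ : BSigned n) (p : Fin (n + 1)) (s : Bool) : BSigned (n + 1) :=
  ((finSuccEquiv' p).trans ((σ.1.optionCongr).trans (finSuccEquiv' (Fin.last n)).symm),
   fun i => (finSuccEquiv' p i).elim s σ.2)

lemma bword_bound {n : ℕ} (σ : BSigned n) (j : ℕ) :
    bword σ j < (n : ℤ) + 1 ∧ -((n : ℤ) + 1) < bword σ j := by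
  unfold bword
  split
  · next h =>
    have hv : ((σ.1 ⟨j - 1, by omega⟩ : ℕ) : ℤ) < n := by exact_mod_cast (σ.1 ⟨j - 1, by omega⟩).2
    cases hb : σ.2 ⟨j - 1, by omega⟩ <;> simp <;> omega
  · constructor <;> omega

lemma bword_ins {n : ℕ} (σ : BSigned n) (p : Fin (n + 1)) (s : Bool) (j : ℕ) :
    bword (ins σ p s) j =
      if j ≤ (p : ℕ) then bword σ j
      else if j = (p : ℕ) + 1 then (if s then -1 else 1) * ((n : ℤ) + 1)
      else bword σ (j - 1) := by
  have hp : (p : ℕ) ≤ n := by omega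
  rcases Nat.eq_zero_or_pos j with hj0 | hj1
  · subst hj0; simp [bword]
  by_cases hA : j ≤ (p : ℕ)
  · rw [if_pos hA]
    have h1 : 1 ≤ j ∧ j ≤ n + 1 := ⟨hj1, by omega⟩
    have h2 : 1 ≤ j ∧ j ≤ n := ⟨hj1, by omega⟩
    have hjn : j - 1 < n := by omega
    unfold bword
    rw [dif_pos h1, dif_pos h2]
    have hcast : (⟨j - 1, by omega⟩ : Fin (n + 1)) = Fin.castSucc ⟨j - 1, hjn⟩ := rfl
    have hmem : finSuccEquiv' p (Fin.castSucc ⟨j - 1, hjn⟩) = some ⟨j - 1, hjn⟩ :=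
      finSuccEquiv'_below (by simp [Fin.lt_def]; omega)
    simp only [ins, Equiv.trans_apply, hcast, hmem, Equiv.optionCongr_apply, Option.map_some,
      finSuccEquiv'_symm_some, Fin.succAbove_last, Option.elim]
    simp [Fin.coe_castSucc]
  · rw [if_neg hA]
    by_cases hB : j = (p : ℕ) + 1
    · rw [if_pos hB]
      have h1 : 1 ≤ j ∧ j ≤ n + 1 := ⟨hj1, by omega⟩
      unfold bword
      rw [dif_pos h1]
      have hcast : (⟨j - 1, by omega⟩ : Fin (n + 1)) = p := by
        apply Fin.ext; simp; omega
      simp only [ins, Equiv.trans_apply, hcast, finSuccEquiv'_at, Equiv.optionCongr_apply,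
        Option.map_none, finSuccEquiv'_symm_none, Option.elim]
      simp [Fin.val_last]
    · rw [if_neg hB]
      by_cases hC : j ≤ n + 1
      · have h1 : 1 ≤ j ∧ j ≤ n + 1 := ⟨hj1, hC⟩
        have h2 : 1 ≤ j - 1 ∧ j - 1 ≤ n := by omega
        have hjn : j - 2 < n := by omega
        unfold bword
        rw [dif_pos h1, dif_pos h2]
        have hcast : (⟨j - 1, by omega⟩ : Fin (n + 1)) = Fin.succ ⟨j - 2, hjn⟩ := by
          apply Fin.ext; simp; omega
        have hmem : finSuccEquiv' p (Fin.succ ⟨j - 2, hjn⟩) = some ⟨j - 2, hjn⟩ :=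
          finSuccEquiv'_above (by simp [Fin.le_def]; omega)
        simp only [ins, Equiv.trans_apply, hcast, hmem, Equiv.optionCongr_apply, Option.map_some,
          finSuccEquiv'_symm_some, Fin.succAbove_last, Option.elim]
        have : j - 1 - 1 = j - 2 := by omega
        simp [Fin.coe_castSucc, this]
      · have h1 : ¬ (1 ≤ j ∧ j ≤ n + 1) := by omega
        have h2 : ¬ (1 ≤ j - 1 ∧ j - 1 ≤ n) := by omega
        unfold bword
        rw [dif_neg h1, dif_neg h2]

lemma altdes_ins_lt {n : ℕ} (σ : BSigned n) (p : Fin (n + 1)) (hp : (p : ℕ) < n) (s : Bool) :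
    altdesB (ins σ p s) + (if acnd (flp σ (p : ℕ)) (p : ℕ) then 1 else 0)
      = altdesB (flp σ (p : ℕ)) + (if (Even (p : ℕ) ↔ s = false) then 2 else 0) := by
  have hlow : ∀ j, j < (p : ℕ) → (acnd (ins σ p s) j ↔ acnd (flp σ (p : ℕ)) j) := by
    intro j hj
    unfold acnd
    rw [bword_ins, bword_ins, bword_flp, bword_flp]
    rw [if_pos (by omega : j ≤ (p : ℕ)), if_pos (by omega : j + 1 ≤ (p : ℕ)),
      if_pos (by omega : j ≤ (p : ℕ)), if_pos (by omega : j + 1 ≤ (p : ℕ))]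
  have hhigh : ∀ j, (p : ℕ) < j → j < n →
      (acnd (ins σ p s) (j + 1) ↔ acnd (flp σ (p : ℕ)) j) := by
    intro j h1 h2
    unfold acnd
    rw [bword_ins, bword_ins, bword_flp, bword_flp]
    rw [if_neg (by omega : ¬ j + 1 ≤ (p : ℕ)), if_neg (by omega : ¬ j + 1 = (p : ℕ) + 1),
      if_neg (by omega : ¬ j + 1 + 1 ≤ (p : ℕ)), if_neg (by omega : ¬ j + 1 + 1 = (p : ℕ) + 1),
      if_neg (by omega : ¬ j ≤ (p : ℕ)), if_neg (by omega : ¬ j + 1 ≤ (p : ℕ))]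
    simp only [Nat.add_sub_cancel]
    simp only [Nat.even_iff, Nat.odd_iff]
    omega
  have hfp : acnd (ins σ p s) (p : ℕ) ↔ (Even (p : ℕ) ↔ s = false) := by
    unfold acnd
    rw [bword_ins, bword_ins]
    rw [if_pos (le_refl (p : ℕ)), if_neg (by omega : ¬ (p : ℕ) + 1 ≤ (p : ℕ)),
      if_pos rfl]
    have hb := bword_bound σ (p : ℕ)
    cases s <;> simp only [Nat.even_iff, Nat.odd_iff] <;> simp <;> omega
  have hfp1 : acnd (ins σ p s) ((p : ℕ) + 1) ↔ (Even (p : ℕ) ↔ s = false) := by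
    unfold acnd
    rw [bword_ins, bword_ins]
    rw [if_neg (by omega : ¬ (p : ℕ) + 1 ≤ (p : ℕ)), if_pos rfl,
      if_neg (by omega : ¬ (p : ℕ) + 1 + 1 ≤ (p : ℕ)),
      if_neg (by omega : ¬ (p : ℕ) + 1 + 1 = (p : ℕ) + 1)]
    simp only [Nat.add_sub_cancel]
    have hb := bword_bound σ ((p : ℕ) + 1)
    cases s <;> simp only [Nat.even_iff, Nat.odd_iff] <;> simp <;> omega
  have key := count_split n (p : ℕ) hp (acnd (ins σ p s)) (acnd (flp σ (p : ℕ))) hlow hhigh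
  rw [altdesB_eq, altdesB_eq, key]
  congr 1
  rw [if_congr hfp rfl rfl, if_congr hfp1 rfl rfl]
  by_cases hm : (Even (p : ℕ) ↔ s = false) <;> simp [hm]

lemma altdes_ins_last {n : ℕ} (σ : BSigned n) (p : Fin (n + 1)) (hp : (p : ℕ) = n) (s : Bool) :
    altdesB (ins σ p s) = altdesB σ + (if (Even n ↔ s = false) then 1 else 0) := by
  rw [altdesB_eq, altdesB_eq, Finset.card_filter, Finset.card_filter,
    Finset.sum_range_succ]
  have hlow : ∀ j, j < n → (acnd (ins σ p s) j ↔ acnd σ j) := by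
    intro j hj
    unfold acnd
    rw [bword_ins, bword_ins]
    rw [if_pos (by omega : j ≤ (p : ℕ)), if_pos (by omega : j + 1 ≤ (p : ℕ))]
  have hfn : acnd (ins σ p s) n ↔ (Even n ↔ s = false) := by
    unfold acnd
    rw [bword_ins, bword_ins]
    rw [if_pos (by omega : n ≤ (p : ℕ)), if_neg (by omega : ¬ n + 1 ≤ (p : ℕ)),
      if_pos (by omega : n + 1 = (p : ℕ) + 1)]
    have hb := bword_bound σ n
    cases s <;> simp only [Nat.even_iff, Nat.odd_iff] <;> simp <;> omega
  rw [if_congr hfn rfl rfl]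
  congr 1
  refine Finset.sum_congr rfl fun j hj => ?_
  rw [if_congr (hlow j (Finset.mem_range.1 hj)) rfl rfl]

lemma ins_fst_apply_self {n : ℕ} (σ : BSigned n) (p : Fin (n + 1)) (s : Bool) :
    (ins σ p s).1 p = Fin.last n := by
  simp [ins]

lemma ins_fst_apply_succAbove {n : ℕ} (σ : BSigned n) (p : Fin (n + 1)) (s : Bool) (i : Fin n) :
    (ins σ p s).1 (p.succAbove i) = Fin.castSucc (σ.1 i) := by
  simp [ins, Fin.succAbove_last]

lemma ins_snd_apply_self {n : ℕ} (σ : BSigned n) (p : Fin (n + 1)) (s : Bool) :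
    (ins σ p s).2 p = s := by
  simp [ins]

lemma ins_snd_apply_succAbove {n : ℕ} (σ : BSigned n) (p : Fin (n + 1)) (s : Bool) (i : Fin n) :
    (ins σ p s).2 (p.succAbove i) = σ.2 i := by
  simp [ins]

lemma ins_bijective (n : ℕ) :
    Function.Bijective (fun z : BSigned n × Fin (n + 1) × Bool => ins z.1 z.2.1 z.2.2) := by
  rw [Fintype.bijective_iff_injective_and_card]
  constructor
  · rintro ⟨σ, p, s⟩ ⟨σ', p', s'⟩ h
    simp only at h
    have hp : p = p' := by
      have h1 : (ins σ' p' s').1 p = Fin.last n := by rw [← h]; exact ins_fst_apply_self σ p s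
      have h2 : (ins σ' p' s').1 p' = Fin.last n := ins_fst_apply_self σ' p' s'
      exact (ins σ' p' s').1.injective (h1.trans h2.symm)
    subst hp
    have hσ1 : σ.1 = σ'.1 := by
      apply Equiv.ext; intro i
      have h1 := congrArg (fun τ : BSigned (n + 1) => τ.1 (p.succAbove i)) h
      simp only [ins_fst_apply_succAbove] at h1
      exact Fin.castSucc_injective n h1
    have hs : s = s' := by
      have h1 := congrArg (fun τ : BSigned (n + 1) => τ.2 p) h
      simpa only [ins_snd_apply_self] using h1
    have hσ2 : σ.2 = σ'.2 := by
      funext i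
      have h1 := congrArg (fun τ : BSigned (n + 1) => τ.2 (p.succAbove i)) h
      simpa only [ins_snd_apply_succAbove] using h1
    rw [Prod.ext hσ1 hσ2, hs]
  · simp only [Fintype.card_prod, Fintype.card_perm, Fintype.card_fin, Fintype.card_fun,
      Fintype.card_bool, Nat.factorial_succ, pow_succ]
    ring

noncomputable def Dsum (n : ℕ) (x : ℝ) : ℝ :=
  ∑ σ : BSigned n, (altdesB σ : ℝ) * x ^ (altdesB σ - 1)

lemma altdesB_le {n : ℕ} (σ : BSigned n) : altdesB σ ≤ n := by
  rw [altdesB_eq]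
  exact le_trans (Finset.card_filter_le _ _) (by simp)

set_option maxHeartbeats 2000000 in
lemma bpoly_rec (n : ℕ) (x : ℝ) :
    Bpoly (n + 1) x = (1 + x) * Bpoly n x
      + (1 + x ^ 2) * ((1 - x) * Dsum n x + n * Bpoly n x) := by
  classical
  have h0 : Bpoly (n + 1) x
      = ∑ z : BSigned n × Fin (n + 1) × Bool, x ^ altdesB (ins z.1 z.2.1 z.2.2) :=
    (Fintype.sum_bijective _ (ins_bijective n) _ _ (fun z => rfl)).symm
  rw [h0, Fintype.sum_prod_type]
  have h1 : ∀ σ : BSigned n, (∑ y : Fin (n + 1) × Bool, x ^ altdesB (ins σ y.1 y.2))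
      = ∑ p : Fin (n + 1), ∑ s : Bool, x ^ altdesB (ins σ p s) := fun σ =>
    Fintype.sum_prod_type' (f := fun p s => x ^ altdesB (ins σ p s))
  simp only [h1]
  have hAB : ∀ (σ : BSigned n) (p : Fin n),
      (∑ s : Bool, x ^ altdesB (ins σ (Fin.castSucc p) s))
        = (1 + x ^ 2) * x ^ altdesB (ins σ (Fin.castSucc p) (decide (Even (p : ℕ)))) := by
    intro σ p
    have hp : ((Fin.castSucc p : Fin (n + 1)) : ℕ) < n := p.isLt
    have ht := altdes_ins_lt σ (Fin.castSucc p) hp true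
    have hf := altdes_ins_lt σ (Fin.castSucc p) hp false
    simp only [Fin.coe_castSucc] at ht hf
    by_cases hq : Even (p : ℕ)
    · simp only [hq, iff_true, iff_false, Bool.true_eq_false, not_true, not_false_iff,
        if_true, if_false, eq_self_iff_true] at ht hf
      have hff : altdesB (ins σ (Fin.castSucc p) false)
          = altdesB (ins σ (Fin.castSucc p) true) + 2 := by omega
      have hd : decide (Even (p : ℕ)) = true := by simp [hq]
      rw [Fintype.sum_bool, hff, hd, pow_add]
      ring
    · simp only [hq, iff_true, iff_false, Bool.true_eq_false, not_true, not_false_iff,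
        if_true, if_false, eq_self_iff_true, iff_self] at ht hf
      have htt : altdesB (ins σ (Fin.castSucc p) true)
          = altdesB (ins σ (Fin.castSucc p) false) + 2 := by omega
      have hd : decide (Even (p : ℕ)) = false := by simp [hq]
      rw [Fintype.sum_bool, htt, hd, pow_add]
      ring
  have hper : ∀ σ : BSigned n, (∑ p : Fin (n + 1), ∑ s : Bool, x ^ altdesB (ins σ p s))
      = (1 + x) * x ^ altdesB σ
        + (1 + x ^ 2) * ∑ p : Fin n,
            x ^ altdesB (ins σ (Fin.castSucc p) (decide (Even (p : ℕ)))) := by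
    intro σ
    rw [Fin.sum_univ_castSucc]
    have hlast : (∑ s : Bool, x ^ altdesB (ins σ (Fin.last n) s)) = (1 + x) * x ^ altdesB σ := by
      rw [Fintype.sum_bool, altdes_ins_last σ (Fin.last n) (by simp) true,
        altdes_ins_last σ (Fin.last n) (by simp) false]
      by_cases hn : Even n <;> simp [hn, pow_succ] <;> ring
    rw [hlast, Finset.mul_sum, Finset.sum_congr rfl (fun p _ => hAB σ p)]
    ring
  simp only [hper]
  rw [Finset.sum_add_distrib, ← Finset.mul_sum, ← Finset.mul_sum]
  have hflip : ∀ p : Fin n,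
      (∑ σ : BSigned n, x ^ altdesB (ins σ (Fin.castSucc p) (decide (Even (p : ℕ)))))
        = ∑ σ : BSigned n,
            (if acnd σ (p : ℕ) then x ^ (altdesB σ - 1) else x ^ altdesB σ) := by
    intro p
    have hbij : Function.Bijective (fun σ : BSigned n => flp σ (p : ℕ)) :=
      Function.Involutive.bijective (fun σ => flp_flp σ (p : ℕ))
    have hre := (Fintype.sum_bijective (fun σ : BSigned n => flp σ (p : ℕ)) hbij
      (fun σ : BSigned n =>
        x ^ altdesB (ins (flp σ (p : ℕ)) (Fin.castSucc p) (decide (Even (p : ℕ)))))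
      (fun σ : BSigned n => x ^ altdesB (ins σ (Fin.castSucc p) (decide (Even (p : ℕ)))))
      (fun σ => rfl))
    rw [← hre]
    refine Finset.sum_congr rfl fun σ _ => ?_
    have hp : ((Fin.castSucc p : Fin (n + 1)) : ℕ) < n := p.isLt
    have hu := altdes_ins_lt (flp σ (p : ℕ)) (Fin.castSucc p) hp (decide (Even (p : ℕ)))
    simp only [Fin.coe_castSucc, flp_flp] at hu
    have hnm : ¬ (Even (p : ℕ) ↔ decide (Even (p : ℕ)) = false) := by
      by_cases hq : Even (p : ℕ) <;> simp [hq]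
    simp only [hnm, if_false] at hu
    by_cases ha : acnd σ (p : ℕ)
    · rw [if_pos ha] at hu
      have hA : altdesB (ins (flp σ (p : ℕ)) (Fin.castSucc p) (decide (Even (p : ℕ))))
          = altdesB σ - 1 := by omega
      rw [if_pos ha, hA]
    · rw [if_neg ha] at hu
      have hA : altdesB (ins (flp σ (p : ℕ)) (Fin.castSucc p) (decide (Even (p : ℕ))))
          = altdesB σ := by omega
      rw [if_neg ha, hA]
  have hS : (∑ σ : BSigned n, ∑ p : Fin n,
        x ^ altdesB (ins σ (Fin.castSucc p) (decide (Even (p : ℕ)))))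
      = (1 - x) * Dsum n x + (n : ℝ) * Bpoly n x := by
    rw [Finset.sum_comm]
    rw [Finset.sum_congr rfl (fun p _ => hflip p)]
    rw [Finset.sum_comm]
    have hone : ∀ σ : BSigned n,
        (∑ p : Fin n, if acnd σ (p : ℕ) then x ^ (altdesB σ - 1) else x ^ altdesB σ)
          = (altdesB σ : ℝ) * x ^ (altdesB σ - 1)
            + ((n : ℝ) - altdesB σ) * x ^ altdesB σ := by
      intro σ
      rw [Fin.sum_univ_eq_sum_range
        (fun j => if acnd σ j then x ^ (altdesB σ - 1) else x ^ altdesB σ)]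
      rw [Finset.sum_ite, Finset.sum_const, Finset.sum_const]
      have hca : ((Finset.range n).filter (acnd σ)).card = altdesB σ := (altdesB_eq σ).symm
      have hcn : ((Finset.range n).filter (fun j => ¬ acnd σ j)).card = n - altdesB σ := by
        have h := Finset.card_filter_add_card_filter_not
          (s := Finset.range n) (p := acnd σ)
        rw [Finset.card_range] at h
        rw [altdesB_eq σ] at *
        omega
      rw [hca, hcn, nsmul_eq_mul, nsmul_eq_mul, Nat.cast_sub (altdesB_le σ)]
    rw [Finset.sum_congr rfl (fun σ _ => hone σ)]
    have htwo : ∀ σ : BSigned n,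
        (altdesB σ : ℝ) * x ^ (altdesB σ - 1) + ((n : ℝ) - altdesB σ) * x ^ altdesB σ
          = (1 - x) * ((altdesB σ : ℝ) * x ^ (altdesB σ - 1)) + (n : ℝ) * x ^ altdesB σ := by
      intro σ
      rcases Nat.eq_zero_or_pos (altdesB σ) with h | h
      · rw [h]; push_cast; ring
      · have hx : x * x ^ (altdesB σ - 1) = x ^ altdesB σ := by
          rw [← pow_succ']
          congr 1
          omega
        linear_combination (altdesB σ : ℝ) * hx
    rw [Finset.sum_congr rfl (fun σ _ => htwo σ), Finset.sum_add_distrib]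
    unfold Dsum Bpoly
    rw [Finset.mul_sum, Finset.mul_sum]
  rw [hS]
  unfold Bpoly
  rfl

lemma hasDerivAt_Bpoly (n : ℕ) (x : ℝ) : HasDerivAt (fun y => Bpoly n y) (Dsum n x) x := by
  unfold Bpoly Dsum
  apply HasDerivAt.fun_sum
  intro σ _
  exact hasDerivAt_pow (altdesB σ) x

theorem stmt9 (n : ℕ) (x : ℝ) (hx : x ≠ 1) :
    Bpoly n x = (1 - x) ^ n * (Q n).eval ((1 + x) / (1 - x)) := by
  induction n generalizing x hx with
  | zero =>
    have ha : ∀ σ : BSigned 0, altdesB σ = 0 := fun σ => by simp [altdesB]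
    simp [Bpoly, Q, ha]
  | succ n ih =>
    have hx1 : (1 : ℝ) - x ≠ 0 := sub_ne_zero.mpr (Ne.symm hx)
    set t := (1 + x) / (1 - x) with ht
    have hden : HasDerivAt (fun y : ℝ => 1 - y) (-1) x := by
      simpa using (hasDerivAt_id x).const_sub 1
    have hnum : HasDerivAt (fun y : ℝ => 1 + y) 1 x := by
      simpa using (hasDerivAt_id x).const_add 1
    have hrat : HasDerivAt (fun y : ℝ => (1 + y) / (1 - y))
        ((1 * (1 - x) - (1 + x) * (-1)) / (1 - x) ^ 2) x := hnum.div hden hx1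
    have hpow : HasDerivAt (fun y : ℝ => (1 - y) ^ n)
        ((n : ℝ) * (1 - x) ^ (n - 1) * (-1)) x := by
      simpa [Function.comp_def] using (hasDerivAt_pow n (1 - x)).comp x hden
    have hQd : HasDerivAt (fun y : ℝ => (Q n).eval ((1 + y) / (1 - y)))
        ((Q n).derivative.eval t * ((1 * (1 - x) - (1 + x) * (-1)) / (1 - x) ^ 2)) x := by
      simpa [Function.comp_def] using ((Q n).hasDerivAt t).comp x hrat
    have hF : HasDerivAt (fun y : ℝ => (1 - y) ^ n * (Q n).eval ((1 + y) / (1 - y)))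
        (((n : ℝ) * (1 - x) ^ (n - 1) * (-1)) * (Q n).eval t
          + (1 - x) ^ n * ((Q n).derivative.eval t
              * ((1 * (1 - x) - (1 + x) * (-1)) / (1 - x) ^ 2))) x := hpow.mul hQd
    have hev : (fun y => Bpoly n y)
        =ᶠ[nhds x] fun y => (1 - y) ^ n * (Q n).eval ((1 + y) / (1 - y)) := by
      filter_upwards [compl_singleton_mem_nhds hx] with y hy
      exact ih y hy
    have hder : Dsum n x = ((n : ℝ) * (1 - x) ^ (n - 1) * (-1)) * (Q n).eval t
          + (1 - x) ^ n * ((Q n).derivative.eval t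
              * ((1 * (1 - x) - (1 + x) * (-1)) / (1 - x) ^ 2)) := by
      rw [← (hasDerivAt_Bpoly n x).deriv, hev.deriv_eq, hF.deriv]
    have hQe : (Q (n + 1)).eval t = t * (Q n).eval t + (1 + t ^ 2) * (Q n).derivative.eval t := by
      simp [Q]
    rw [bpoly_rec, ih x hx, hder, hQe, ht]
    rcases Nat.eq_zero_or_pos n with h0 | h1
    · subst h0
      norm_num
      field_simp
      ring
    · obtain ⟨m, rfl⟩ : ∃ m, n = m + 1 := ⟨n - 1, by omega⟩
      simp only [Nat.add_sub_cancel]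
      push_cast
      field_simp
      ring
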